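/- Let A be a ternary algebra over ℚ admitting B₀, C₀ with A·B₀*·C₀ = A for all A. Define R as formal symbols A·B₀* (A ∈ A) with addition (A·B₀*) + (B·B₀*) = (A+B)·B₀* and multiplication (A·B₀*)·(B·B₀*) = (A·B₀*·B)·B₀*. Then multiplication on R is commutative with identity C₀·B₀*, and A is a left R-module via (A·B₀*)·C := A·B₀*·C. -/
import Mathlib

/-- In a ternary algebra over `ℚ` with identity pair `(B₀, C₀)`, the symbols `A·B₀*`
(identified with elements `A`) form a commutative multiplicative structure with
identity `C₀·B₀*` under `(A·B₀*)·(B·B₀*) := (A·B₀*·B)·B₀*`, and the algebra is a left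
module over it via `(A·B₀*)·C := A·B₀*·C`. -/
theorem ternary_algebra_scalar_ring {V : Type*} [AddCommGroup V] [Module ℚ V]
    (op : V → V → V → V)
    (hcomm : ∀ A B C, op A B C = op C B A)
    (hassoc : ∀ A B C D E, op (op A B C) D E = op A B (op C D E))
    (hdistrib : ∀ A B C D, op (A + D) B C = op A B C + op D B C)
    (hlin : ∀ (α : ℚ) (A B C), op (α • A) B C = α • op A B C ∧
      α • op A B C = op A B (α • C))
    (B0 C0 : V)
    (hid : ∀ A, op A B0 C0 = A)
    (mul : V → V → V) (hmul : ∀ A B, mul A B = op A B0 B)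
    (smul : V → V → V) (hsmul : ∀ A C, smul A C = op A B0 C) :
    -- multiplication of symbols is commutative with identity `C₀·B₀*`
    (∀ A B, mul A B = mul B A) ∧
    (∀ A, mul C0 A = A ∧ mul A C0 = A) ∧
    (∀ A B D, mul (mul A B) D = mul A (mul B D)) ∧
    -- left-module axioms for the action of the symbols on `V`
    (∀ A B C, smul (mul A B) C = smul A (smul B C)) ∧
    (∀ C, smul C0 C = C) ∧
    (∀ A B C, smul (A + B) C = smul A C + smul B C) ∧
    (∀ A C D, smul A (C + D) = smul A C + smul A D) := by
  refine ⟨fun A B => by rw [hmul, hmul, hcomm],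
    fun A => ⟨by rw [hmul, hcomm, hid], by rw [hmul, hid]⟩,
    fun A B D => by rw [hmul, hmul, hmul, hmul, hassoc],
    fun A B C => by rw [hsmul, hmul, hsmul, hsmul, hassoc],
    fun C => by rw [hsmul, hcomm, hid],
    fun A B C => by rw [hsmul, hsmul, hsmul, hdistrib],
    fun A C D => by rw [hsmul, hsmul, hsmul, hcomm A, hdistrib, hcomm C, hcomm D]⟩
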